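/- Let N ≥ 1, let A = [a_{ij}] be a real N×N matrix with a_{ij} ≥ 0 and a_{ii} = 0, and let a_{10}, …, a_{N0} ≥ 0. Set D = diag(d₁,…,d_N) with d_i = ∑_{j=1}^N a_{ij}, L = D − A, B = diag(a_{10},…,a_{N0}), and H = L + B. Suppose that in the directed graph on nodes {0,1,…,N} with an edge from j to i (for i,j ∈ {1,…,N}) whenever a_{ij} > 0 and an edge from 0 to i whenever a_{i0} > 0, every node i ∈ {1,…,N} is reachable from node 0 by a directed path. Then H is invertible, the vector π = (Hᵀ)^{-1} 1_N has all entries strictly positive, and with Π = diag(π₁,…,π_N) the symmetric matrix Ξ = (ΠH + HᵀΠ)/2 is positive definite. -/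

import Mathlib

open Matrix

lemma sign_lemma (N : ℕ)
    (A : Matrix (Fin N) (Fin N) ℝ)
    (hA_nonneg : ∀ i j, 0 ≤ A i j)
    (a0 : Fin N → ℝ) (ha0 : ∀ i, 0 ≤ a0 i)
    (edge : Option (Fin N) → Option (Fin N) → Prop)
    (hedge : ∀ u v : Option (Fin N), edge u v ↔
      (∃ i j : Fin N, u = some j ∧ v = some i ∧ 0 < A i j) ∨
        (∃ i : Fin N, u = none ∧ v = some i ∧ 0 < a0 i))
    (hreach : ∀ i : Fin N, Relation.ReflTransGen edge none (some i))
    (x c : Fin N → ℝ) (hc : ∀ i, 0 ≤ c i)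
    (heq : ∀ i, ((∑ j, A i j) + a0 i) * x i = (∑ j, A i j * x j) + c i) :
    ∀ i, 0 ≤ x i := by
  by_contra hcon
  push_neg at hcon
  obtain ⟨i0, hi0⟩ := hcon
  have hne : (Finset.univ : Finset (Fin N)).Nonempty := ⟨i0, Finset.mem_univ i0⟩
  set m := Finset.univ.inf' hne x with hm
  have hm_le : ∀ j, m ≤ x j := fun j => Finset.inf'_le x (Finset.mem_univ j)
  have hm_neg : m < 0 := lt_of_le_of_lt (hm_le i0) hi0
  have hclosed : ∀ i, x i = m → a0 i = 0 ∧ ∀ j, 0 < A i j → x j = m := by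
    intro i hxi
    have heqi := heq i
    rw [hxi] at heqi
    have hsum0 : ∑ j, A i j * (x j - m) = a0 i * m - c i := by
      have : ∑ j, A i j * (x j - m) = (∑ j, A i j * x j) - (∑ j, A i j) * m := by
        rw [Finset.sum_mul, ← Finset.sum_sub_distrib]
        exact Finset.sum_congr rfl (fun j _ => by ring)
      rw [this]; linarith [heqi]
    have hterm : ∀ j ∈ Finset.univ, 0 ≤ A i j * (x j - m) := fun j _ =>
      mul_nonneg (hA_nonneg i j) (by linarith [hm_le j])
    have hsnn : 0 ≤ ∑ j, A i j * (x j - m) := Finset.sum_nonneg hterm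
    have ha0m : a0 i * m ≤ 0 := mul_nonpos_of_nonneg_of_nonpos (ha0 i) hm_neg.le
    have hz : ∑ j, A i j * (x j - m) = 0 := le_antisymm (by linarith [hc i]) hsnn
    have ha00 : a0 i = 0 := by
      have : a0 i * m = 0 := by linarith [hc i, hsum0, hz]
      rcases mul_eq_zero.1 this with h | h
      · exact h
      · exact absurd h hm_neg.ne
    refine ⟨ha00, fun j hAij => ?_⟩
    have := (Finset.sum_eq_zero_iff_of_nonneg hterm).1 hz j (Finset.mem_univ j)
    rcases mul_eq_zero.1 this with h | h
    · exact absurd h hAij.ne'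
    · linarith
  have hnot : ∀ v, Relation.ReflTransGen edge none v → ∀ i, v = some i → x i ≠ m := by
    intro v hv
    induction hv with
    | refl => intro i h; exact absurd h (by simp)
    | tail hab hbc ih =>
      intro i hci hxi
      rcases (hedge _ _).1 hbc with ⟨p, q, hb, hcp, hApq⟩ | ⟨p, hb, hcp, hap⟩
      · have hpi : i = p := Option.some.inj (hci.symm.trans hcp)
        subst hpi
        have hxj := (hclosed i hxi).2 q hApq
        exact ih q hb hxj
      · have hpi : i = p := Option.some.inj (hci.symm.trans hcp)
        subst hpi
        have := (hclosed i hxi).1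
        linarith
  obtain ⟨k, _, hk⟩ := Finset.exists_mem_eq_inf' hne x
  exact hnot _ (hreach k) k rfl hk.symm

lemma key_ineq (N : ℕ) (A : Matrix (Fin N) (Fin N) ℝ)
    (hA_nonneg : ∀ i j, 0 ≤ A i j)
    (a0 π x w : Fin N → ℝ)
    (ha0 : ∀ i, 0 ≤ a0 i) (hπ : ∀ i, 0 ≤ π i)
    (hrel : ∀ j, ∑ i, π i * A i j = ((∑ k, A j k) + a0 j) * π j - 1)
    (hw : ∀ i, w i = ((∑ j, A i j) + a0 i) * x i - ∑ j, A i j * x j)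
    (hx : x ≠ 0) :
    0 < ∑ i, π i * x i * w i := by
  set S1 := ∑ i, ∑ j, π i * A i j * (x i)^2 with hS1
  set S2 := ∑ i, ∑ j, π i * A i j * (x i * x j) with hS2
  set S3 := ∑ i, ∑ j, π i * A i j * (x j)^2 with hS3
  set Q := ∑ i, (x i)^2 with hQ
  set R := ∑ i, π i * a0 i * (x i)^2 with hR
  have hs1 : ∀ i, ∑ j, π i * A i j * (x i)^2 = (∑ j, A i j) * (π i * (x i)^2) := by
    intro i; rw [Finset.sum_mul]; exact Finset.sum_congr rfl fun j _ => by ring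
  have hs2 : ∀ i, ∑ j, π i * A i j * (x i * x j) = (π i * x i) * (∑ j, A i j * x j) := by
    intro i; rw [Finset.mul_sum]; exact Finset.sum_congr rfl fun j _ => by ring
  have e1 : ∑ i, π i * x i * w i = S1 + R - S2 := by
    rw [hS1, hS2, ← Finset.sum_add_distrib, ← Finset.sum_sub_distrib]
    refine Finset.sum_congr rfl fun i _ => ?_
    rw [hw i, hs1 i, hs2 i]; ring
  have e2 : S3 = S1 + R - Q := by
    rw [hS3, Finset.sum_comm]
    calc ∑ j, ∑ i, π i * A i j * (x j)^2
        = ∑ j, (∑ i, π i * A i j) * (x j)^2 := by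
          exact Finset.sum_congr rfl fun j _ => by rw [Finset.sum_mul]
      _ = ∑ j, ((((∑ k, A j k) + a0 j) * π j - 1)) * (x j)^2 := by
          exact Finset.sum_congr rfl fun j _ => by rw [hrel j]
      _ = ∑ j, ((∑ k, A j k) * (π j * (x j)^2) + π j * a0 j * (x j)^2 - (x j)^2) := by
          exact Finset.sum_congr rfl fun j _ => by ring
      _ = S1 + R - Q := by
          rw [hS1, hR, hQ, ← Finset.sum_add_distrib, ← Finset.sum_sub_distrib]
          exact Finset.sum_congr rfl fun j _ => by rw [hs1 j]
  have e3 : 2 * S2 ≤ S1 + S3 := by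
    rw [hS1, hS2, hS3, Finset.mul_sum, ← Finset.sum_add_distrib]
    refine Finset.sum_le_sum fun i _ => ?_
    rw [Finset.mul_sum, ← Finset.sum_add_distrib]
    refine Finset.sum_le_sum fun j _ => ?_
    nlinarith [sq_nonneg (x i - x j), mul_nonneg (hπ i) (hA_nonneg i j)]
  have hRnn : 0 ≤ R := Finset.sum_nonneg fun i _ =>
    mul_nonneg (mul_nonneg (hπ i) (ha0 i)) (sq_nonneg _)
  have hQpos : 0 < Q := by
    obtain ⟨k, hk⟩ := Function.ne_iff.1 hx
    have h : x k ≠ 0 := by simpa using hk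
    exact Finset.sum_pos' (fun i _ => sq_nonneg _)
      ⟨k, Finset.mem_univ k, by positivity⟩
  linarith

lemma quad_form (n : ℕ) (π x : Fin n → ℝ) (H : Matrix (Fin n) (Fin n) ℝ) :
    x ⬝ᵥ ((Matrix.diagonal π * H + Hᵀ * Matrix.diagonal π) *ᵥ x)
      = 2 * ∑ i, π i * x i * (H *ᵥ x) i := by
  rw [Matrix.add_mulVec, dotProduct_add]
  rw [← Matrix.mulVec_mulVec, ← Matrix.mulVec_mulVec]
  rw [dotProduct_mulVec x Hᵀ, Matrix.vecMul_transpose]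
  simp only [dotProduct, Matrix.mulVec_diagonal]
  rw [Finset.mul_sum, ← Finset.sum_add_distrib]
  exact Finset.sum_congr rfl (fun i _ => by ring)

theorem directed_spanning_tree_H_posdef
    (N : ℕ) (hN : 1 ≤ N)
    (A : Matrix (Fin N) (Fin N) ℝ)
    (hA_nonneg : ∀ i j, 0 ≤ A i j)
    (hA_diag : ∀ i, A i i = 0)
    (a0 : Fin N → ℝ) (ha0 : ∀ i, 0 ≤ a0 i)
    (H : Matrix (Fin N) (Fin N) ℝ)
    (hH : H = (Matrix.diagonal fun i => ∑ j, A i j) - A + Matrix.diagonal a0)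
    -- edge relation of the leader-follower digraph on nodes {0} ∪ {1,…,N},
    -- with `none` playing the role of the leader node 0:
    (edge : Option (Fin N) → Option (Fin N) → Prop)
    (hedge : ∀ u v : Option (Fin N), edge u v ↔
      (∃ i j : Fin N, u = some j ∧ v = some i ∧ 0 < A i j) ∨
        (∃ i : Fin N, u = none ∧ v = some i ∧ 0 < a0 i))
    -- every follower is reachable from the leader by a directed path:
    (hreach : ∀ i : Fin N, Relation.ReflTransGen edge none (some i)) :
    IsUnit H ∧
      (∀ i : Fin N, 0 < (Hᵀ⁻¹ *ᵥ (fun _ => (1 : ℝ))) i) ∧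
      (((1 : ℝ) / 2) •
          (Matrix.diagonal (Hᵀ⁻¹ *ᵥ (fun _ => (1 : ℝ))) * H +
            Hᵀ * Matrix.diagonal (Hᵀ⁻¹ *ᵥ (fun _ => (1 : ℝ))))).PosDef := by
  have hHrow : ∀ (v : Fin N → ℝ) (i : Fin N),
      (H *ᵥ v) i = ((∑ j, A i j) + a0 i) * v i - ∑ j, A i j * v j := by
    intro v i
    rw [hH]
    simp [Matrix.mulVec, dotProduct, Matrix.sub_apply, Matrix.add_apply,
      Matrix.diagonal_apply, ite_mul, sub_mul, add_mul, Finset.sum_sub_distrib,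
      Finset.sum_add_distrib, Finset.sum_ite_eq, Finset.mem_univ]
    ring
  have hsign : ∀ (v c : Fin N → ℝ), (∀ i, 0 ≤ c i) → H *ᵥ v = c → ∀ i, 0 ≤ v i := by
    intro v c hc hvc
    refine sign_lemma N A hA_nonneg a0 ha0 edge hedge hreach v c hc (fun i => ?_)
    have h := congrFun hvc i
    rw [hHrow v i] at h
    linarith
  have hdpos : ∀ i, 0 < (∑ j, A i j) + a0 i := by
    intro i
    rcases Relation.ReflTransGen.cases_tail (hreach i) with h | ⟨b, hb, he⟩
    · exact absurd h (by simp)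
    · rcases (hedge _ _).1 he with ⟨p, q, hb', hcp, hApq⟩ | ⟨p, hb', hcp, hap⟩
      · obtain rfl : i = p := Option.some.inj hcp
        have h1 : A i q ≤ ∑ j, A i j :=
          Finset.single_le_sum (fun j _ => hA_nonneg i j) (Finset.mem_univ q)
        linarith [ha0 i]
      · obtain rfl : i = p := Option.some.inj hcp
        have h1 : 0 ≤ ∑ j, A i j := Finset.sum_nonneg fun j _ => hA_nonneg i j
        linarith
  have hdet : H.det ≠ 0 := by
    intro h0
    obtain ⟨v, hv0, hvz⟩ := Matrix.exists_mulVec_eq_zero_iff.2 h0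
    have h1 : ∀ i, 0 ≤ v i := hsign v 0 (fun i => le_rfl) hvz
    have hneg : H *ᵥ (-v) = 0 := by rw [Matrix.mulVec_neg, hvz, neg_zero]
    have h2 : ∀ i, 0 ≤ -v i := hsign (-v) 0 (fun i => le_rfl) hneg
    refine hv0 (funext fun i => ?_)
    have := h1 i; have := h2 i
    show v i = 0
    linarith
  have hunit : IsUnit H := (Matrix.isUnit_iff_isUnit_det H).2 (isUnit_iff_ne_zero.2 hdet)
  have hdetT : Hᵀ.det ≠ 0 := by rwa [Matrix.det_transpose]
  set π : Fin N → ℝ := Hᵀ⁻¹ *ᵥ (fun _ => (1:ℝ)) with hπdef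
  have hπeq : Hᵀ *ᵥ π = fun _ => (1:ℝ) := by
    rw [hπdef, Matrix.mulVec_mulVec,
      Matrix.mul_nonsing_inv _ (isUnit_iff_ne_zero.2 hdetT), Matrix.one_mulVec]
  have hrel : ∀ j, ∑ i, π i * A i j = ((∑ k, A j k) + a0 j) * π j - 1 := by
    intro j
    have h1 := congrFun hπeq j
    rw [Matrix.mulVec_transpose] at h1
    rw [hH] at h1
    simp only [Matrix.vecMul, dotProduct, Matrix.sub_apply, Matrix.add_apply,
      Matrix.diagonal_apply, mul_sub, mul_add, mul_ite, mul_zero,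
      Finset.sum_sub_distrib, Finset.sum_add_distrib, Finset.sum_ite_eq',
      Finset.mem_univ, if_true] at h1
    linarith [h1]
  have hπpos : ∀ k, 0 < π k := by
    intro k
    set xk : Fin N → ℝ := H⁻¹ *ᵥ Pi.single k 1 with hxkdef
    have hxk : H *ᵥ xk = Pi.single k 1 := by
      rw [hxkdef, Matrix.mulVec_mulVec,
        Matrix.mul_nonsing_inv _ (isUnit_iff_ne_zero.2 hdet), Matrix.one_mulVec]
    have hxknn : ∀ j, 0 ≤ xk j := by
      refine hsign xk _ (fun i => ?_) hxk
      rw [Pi.single_apply]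
      split <;> norm_num
    have hrowk := congrFun hxk k
    rw [hHrow xk k] at hrowk
    simp only [Pi.single_apply, if_pos rfl, if_true] at hrowk
    have hsumnn : 0 ≤ ∑ j, A k j * xk j :=
      Finset.sum_nonneg fun j _ => mul_nonneg (hA_nonneg k j) (hxknn j)
    have hxkk : 0 < xk k := by
      by_contra hle
      push_neg at hle
      have : ((∑ j, A k j) + a0 k) * xk k ≤ 0 :=
        mul_nonpos_of_nonneg_of_nonpos (hdpos k).le hle
      linarith
    have hπk : π k = ∑ j, xk j := by
      rw [hπdef, ← Matrix.transpose_nonsing_inv]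
      simp only [Matrix.mulVec, dotProduct, Matrix.transpose_apply, mul_one]
      refine Finset.sum_congr rfl fun j _ => ?_
      rw [hxkdef]
      simp [Matrix.mulVec_single]
    rw [hπk]
    calc (0:ℝ) < xk k := hxkk
      _ ≤ ∑ j, xk j := Finset.single_le_sum (fun j _ => hxknn j) (Finset.mem_univ k)
  refine ⟨hunit, hπpos, ?_⟩
  have herm : (((1 : ℝ) / 2) •
      (Matrix.diagonal π * H + Hᵀ * Matrix.diagonal π)).IsHermitian := by
    show _ = _
    ext i j
    simp only [Matrix.conjTranspose_apply, Matrix.smul_apply, Matrix.add_apply,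
      Matrix.diagonal_mul, Matrix.mul_diagonal, Matrix.transpose_apply, star_trivial,
      smul_eq_mul]
    ring
  refine Matrix.PosDef.of_dotProduct_mulVec_pos herm (fun y hy => ?_)
  have hq : y ⬝ᵥ ((((1 : ℝ) / 2) •
      (Matrix.diagonal π * H + Hᵀ * Matrix.diagonal π)) *ᵥ y)
      = ∑ i, π i * y i * (H *ᵥ y) i := by
    rw [Matrix.smul_mulVec, dotProduct_smul, quad_form]
    rw [smul_eq_mul]; ring
  have hkey := key_ineq N A hA_nonneg a0 π y (fun i => (H *ᵥ y) i) ha0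
    (fun i => (hπpos i).le) hrel (fun i => hHrow y i) hy
  simp only [star_trivial]
  rw [hq]
  exact hkey
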